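/- arXiv:2507.04170 — 3 statements merged into one kernel-verified Lean document; each statement's English description precedes it below -/
import Mathlib

section
/- Let C₁ and C₂ be distinct compact configurations with the same number n of cells. Then there exist cells m₁ ∈ C₁ \ C₂ and m₂ ∈ C₂ \ C₁ such that C₁′ = (C₁ ∪ {m₂}) \ {m₁} is compact, has n cells, and |C₁′ \ C₂| = |C₁ \ C₂| − 1. -/
abbrev Cell := ℕ × ℕ × ℕ

/-- `c` dominates `c'` if each coordinate of `c'` is at most the corresponding coordinate of `c`. -/
def Dominates (c c' : Cell) : Prop :=
  c'.1 ≤ c.1 ∧ c'.2.1 ≤ c.2.1 ∧ c'.2.2 ≤ c.2.2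

/-- A module `m` of `C` is compact if every cell dominated by `m` is in `C`. -/
def CompactAt (C : Finset Cell) (m : Cell) : Prop :=
  ∀ c, Dominates m c → c ∈ C

/-- A configuration is compact if all its modules are compact. -/
def IsCompactConfig (C : Finset Cell) : Prop :=
  ∀ m ∈ C, CompactAt C m

def cellW (c : Cell) : ℕ := c.1 + c.2.1 + c.2.2

lemma cellW_le {m c : Cell} (h : Dominates m c) : cellW c ≤ cellW m := by
  obtain ⟨a, b, d⟩ := h; unfold cellW; omega

lemma eq_of_cellW_le {m c : Cell} (h : Dominates m c) (hw : cellW m ≤ cellW c) : c = m := by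
  obtain ⟨a, b, d⟩ := h
  obtain ⟨x, y, z⟩ := c; obtain ⟨x', y', z'⟩ := m
  simp only [cellW] at *
  simp only [Prod.mk.injEq]
  omega

/-- One exchange step between two distinct equinumerous compact configurations. -/
theorem exchange_step (C₁ C₂ : Finset Cell) (n : ℕ)
    (h₁ : IsCompactConfig C₁) (h₂ : IsCompactConfig C₂)
    (hcard₁ : C₁.card = n) (hcard₂ : C₂.card = n) (hne : C₁ ≠ C₂) :
    ∃ m₁ ∈ C₁ \ C₂, ∃ m₂ ∈ C₂ \ C₁,
      IsCompactConfig ((insert m₂ C₁).erase m₁) ∧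
      ((insert m₂ C₁).erase m₁).card = n ∧
      (((insert m₂ C₁).erase m₁) \ C₂).card = (C₁ \ C₂).card - 1 := by
  have hd₁ : (C₁ \ C₂).Nonempty := by
    rw [Finset.sdiff_nonempty]
    intro hsub
    exact hne (Finset.eq_of_subset_of_card_le hsub (by omega))
  have hd₂ : (C₂ \ C₁).Nonempty := by
    rw [Finset.sdiff_nonempty]
    intro hsub
    exact hne (Finset.eq_of_subset_of_card_le hsub (by omega)).symm
  obtain ⟨m₁, hm₁, hmax⟩ := Finset.exists_max_image (C₁ \ C₂) cellW hd₁
  obtain ⟨m₂, hm₂, hmin⟩ := Finset.exists_min_image (C₂ \ C₁) cellW hd₂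
  obtain ⟨hm₁C₁, hm₁C₂⟩ := Finset.mem_sdiff.mp hm₁
  obtain ⟨hm₂C₂, hm₂C₁⟩ := Finset.mem_sdiff.mp hm₂
  have hne12 : m₁ ≠ m₂ := fun h => hm₂C₁ (h ▸ hm₁C₁)
  refine ⟨m₁, hm₁, m₂, hm₂, ?_, ?_, ?_⟩
  · -- compactness
    intro m hm c hdom
    rw [Finset.mem_erase] at hm ⊢
    obtain ⟨hmne, hmI⟩ := hm
    have hcI : c ∈ insert m₂ C₁ := by
      rcases Finset.mem_insert.mp hmI with h | h
      · rw [h] at hdom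
        by_cases hc : c = m₂
        · exact hc ▸ Finset.mem_insert_self _ _
        · have hcC₂ : c ∈ C₂ := h₂ m₂ hm₂C₂ c hdom
          have hcC₁ : c ∈ C₁ := by
            by_contra hcC₁
            have := hmin c (Finset.mem_sdiff.mpr ⟨hcC₂, hcC₁⟩)
            exact hc (eq_of_cellW_le hdom this)
          exact Finset.mem_insert_of_mem hcC₁
      · exact Finset.mem_insert_of_mem (h₁ m h c hdom)
    refine ⟨?_, hcI⟩
    rintro rfl
    -- m dominates m₁, m ≠ m₁
    rcases Finset.mem_insert.mp hmI with h | h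
    · exact hm₁C₂ (h₂ m₂ hm₂C₂ c (h ▸ hdom))
    · by_cases hmC₂ : m ∈ C₂
      · exact hm₁C₂ (h₂ m hmC₂ c hdom)
      · have := hmax m (Finset.mem_sdiff.mpr ⟨h, hmC₂⟩)
        exact hmne (eq_of_cellW_le hdom this).symm
  · -- card
    rw [Finset.card_erase_of_mem
        (Finset.mem_insert_of_mem hm₁C₁),
      Finset.card_insert_of_notMem hm₂C₁]
    omega
  · -- sdiff card
    have : ((insert m₂ C₁).erase m₁) \ C₂ = (C₁ \ C₂).erase m₁ := by
      ext c
      simp only [Finset.mem_sdiff, Finset.mem_erase, Finset.mem_insert]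
      constructor
      · rintro ⟨⟨hc1, hc2 | hc2⟩, hc3⟩
        · exact absurd (hc2 ▸ hm₂C₂) hc3
        · exact ⟨hc1, hc2, hc3⟩
      · rintro ⟨hc1, hc2, hc3⟩
        exact ⟨⟨hc1, Or.inr hc2⟩, hc3⟩
    rw [this, Finset.card_erase_of_mem hm₁]
end

section
/- Any two compact configurations with the same number n of cells can be transformed into each other by a sequence of at most n steps, each of which removes one cell and adds one cell while keeping the configuration compact at every intermediate stage. -/
/-- A step removes one cell and adds one cell, keeping the configuration compact
and of the same cardinality. -/
def Step (C C' : Finset Cell) : Prop :=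
  IsCompactConfig C' ∧ C'.card = C.card ∧ (C \ C').card = 1 ∧ (C' \ C).card = 1

lemma dom_iff (c c' : Cell) : Dominates c c' ↔ c' ≤ c := by
  simp [Dominates, Prod.le_def, and_assoc]

/-- Two equinumerous compact configurations are connected by at most n steps. -/
theorem compact_to_compact (C₁ C₂ : Finset Cell) (n : ℕ)
    (h₁ : IsCompactConfig C₁) (h₂ : IsCompactConfig C₂)
    (hcard₁ : C₁.card = n) (hcard₂ : C₂.card = n) :
    ∃ k ≤ n, ∃ f : ℕ → Finset Cell,
      f 0 = C₁ ∧ f k = C₂ ∧ ∀ i < k, Step (f i) (f (i + 1)) := by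
  classical
  suffices H : ∀ d (C : Finset Cell), IsCompactConfig C → C.card = n → (C \ C₂).card = d →
      ∃ k ≤ d, ∃ f : ℕ → Finset Cell, f 0 = C ∧ f k = C₂ ∧ ∀ i < k, Step (f i) (f (i + 1)) by
    obtain ⟨k, hk, f, hf⟩ := H (C₁ \ C₂).card C₁ h₁ hcard₁ rfl
    exact ⟨k, hk.trans (le_trans (Finset.card_le_card Finset.sdiff_subset) hcard₁.le), f, hf⟩
  intro d
  induction d with
  | zero =>
    intro C hC hcard hd
    have hCeq : C = C₂ := Finset.eq_of_subset_of_card_le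
      (by rwa [Finset.card_eq_zero, Finset.sdiff_eq_empty_iff_subset] at hd) (by omega)
    exact ⟨0, le_refl 0, fun _ => C₂, by simp [hCeq], rfl, by omega⟩
  | succ d ih =>
    intro C hC hcard hd
    have hDne : (C \ C₂).Nonempty := Finset.card_pos.mp (by omega)
    have hEne : (C₂ \ C).Nonempty := by
      rw [Finset.sdiff_nonempty]
      intro hsub
      have : C₂ = C := Finset.eq_of_subset_of_card_le hsub (by omega)
      rw [this, Finset.sdiff_self, Finset.card_empty] at hd
      omega
    obtain ⟨m, hmD, hmmax⟩ := (C \ C₂).exists_maximal hDne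
    obtain ⟨m', hm'E, hm'min⟩ := (C₂ \ C).exists_minimal hEne
    rw [Finset.mem_sdiff] at hmD hm'E
    obtain ⟨hmC, hmC₂⟩ := hmD
    obtain ⟨hm'C₂, hm'C⟩ := hm'E
    have hmm' : m ≠ m' := fun h => hmC₂ (h ▸ hm'C₂)
    -- Claim A: cells of C dominating m equal m
    have claimA : ∀ c ∈ C, m ≤ c → c = m := by
      intro c hcC hmc
      by_cases hc2 : c ∈ C₂
      · exact absurd (h₂ c hc2 m ((dom_iff c m).mpr hmc)) hmC₂
      · have : ¬ m < c := fun h' => h'.ne (le_antisymm h'.le (hmmax (Finset.mem_sdiff.mpr ⟨hcC, hc2⟩) hmc))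
        rcases lt_or_eq_of_le hmc with h | h
        · exact absurd h this
        · exact h.symm
    -- Claim B
    have claimB : ∀ c : Cell, c ≤ m' → c ≠ m' → c ∈ C ∧ c ≠ m := by
      intro c hcm' hne
      have hc2 : c ∈ C₂ := h₂ m' hm'C₂ c ((dom_iff m' c).mpr hcm')
      constructor
      · by_contra hcC
        exact hne (le_antisymm hcm' (hm'min (Finset.mem_sdiff.mpr ⟨hc2, hcC⟩) hcm'))
      · exact fun h => hmC₂ (h ▸ hc2)
    set C' : Finset Cell := insert m' (C.erase m) with hC'def
    have hm'notin : m' ∉ C.erase m := fun h => hm'C (Finset.mem_of_mem_erase h)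
    have hC'compact : IsCompactConfig C' := by
      intro a haC' c hdom
      rw [dom_iff] at hdom
      rw [hC'def, Finset.mem_insert] at haC' ⊢
      rcases haC' with rfl | ha
      · by_cases hce : c = a
        · exact Or.inl hce
        · obtain ⟨h1, h2⟩ := claimB c hdom hce
          exact Or.inr (Finset.mem_erase.mpr ⟨h2, h1⟩)
      · obtain ⟨hane, haC⟩ := Finset.mem_erase.mp ha
        have hcC : c ∈ C := hC a haC c ((dom_iff a c).mpr hdom)
        refine Or.inr (Finset.mem_erase.mpr ⟨?_, hcC⟩)
        rintro rfl
        exact hane (claimA a haC hdom)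
    have hcard' : C'.card = C.card := by
      rw [hC'def, Finset.card_insert_of_notMem hm'notin, Finset.card_erase_of_mem hmC]
      have : 0 < C.card := Finset.card_pos.mpr ⟨m, hmC⟩
      omega
    have hsd1 : C \ C' = {m} := by
      ext c
      simp only [hC'def, Finset.mem_sdiff, Finset.mem_insert, Finset.mem_erase,
        Finset.mem_singleton]
      constructor
      · rintro ⟨hcC, hc⟩
        push_neg at hc
        by_contra hne
        exact (hc.2 hne) hcC
      · rintro rfl
        exact ⟨hmC, by push_neg; exact ⟨hmm', fun h => absurd rfl h⟩⟩
    have hsd2 : C' \ C = {m'} := by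
      ext c
      simp only [hC'def, Finset.mem_sdiff, Finset.mem_insert, Finset.mem_erase,
        Finset.mem_singleton]
      constructor
      · rintro ⟨hc, hcC⟩
        rcases hc with rfl | ⟨_, h⟩
        · rfl
        · exact absurd h hcC
      · rintro rfl
        exact ⟨Or.inl rfl, hm'C⟩
    have hstep : Step C C' := ⟨hC'compact, hcard', by rw [hsd1]; rfl, by rw [hsd2]; rfl⟩
    have hsd3 : (C' \ C₂) = (C \ C₂).erase m := by
      ext c
      simp only [hC'def, Finset.mem_sdiff, Finset.mem_insert, Finset.mem_erase]
      constructor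
      · rintro ⟨hc, hc2⟩
        rcases hc with rfl | ⟨hne, hcC⟩
        · exact absurd hm'C₂ hc2
        · exact ⟨hne, hcC, hc2⟩
      · rintro ⟨hne, hcC, hc2⟩
        exact ⟨Or.inr ⟨hne, hcC⟩, hc2⟩
    have hd' : (C' \ C₂).card = d := by
      rw [hsd3, Finset.card_erase_of_mem (Finset.mem_sdiff.mpr ⟨hmC, hmC₂⟩), hd]
      omega
    obtain ⟨k, hk, f, hf0, hfk, hfs⟩ := ih C' hC'compact (by omega) hd'
    refine ⟨k + 1, by omega, fun i => if i = 0 then C else f (i - 1), by simp, by simp [hfk], ?_⟩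
    intro i hi
    rcases Nat.eq_zero_or_pos i with rfl | hpos
    · simpa [hf0] using hstep
    · have h1 : i ≠ 0 := by omega
      have h2 : i + 1 ≠ 0 := by omega
      simp only [h1, h2, if_false]
      have : i + 1 - 1 = (i - 1) + 1 := by omega
      rw [this]
      exact hfs (i - 1) (by omega)
end

section
/- In a quasi-compact configuration C, every module m that is not compact has both cells m + (1,0,0) and m + (0,1,0) empty (not in C). -/
/-- Cell c is below c' if they share x- and y-coordinates and c has smaller z. -/
def Below (c c' : Cell) : Prop :=
  c.1 = c'.1 ∧ c.2.1 = c'.2.1 ∧ c.2.2 < c'.2.2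

/-- m is quasi-compact if every dominated cell not below m is occupied. -/
def QuasiCompactAt (C : Finset Cell) (m : Cell) : Prop :=
  ∀ c, Dominates m c → ¬ Below c m → c ∈ C

/-- In a quasi-compact configuration, a non-compact module has both of the cells
at +x and +y empty. -/
theorem noncompact_free_sides (C : Finset Cell)
    (hqc : ∀ m ∈ C, QuasiCompactAt C m) (m : Cell) (hm : m ∈ C)
    (hnc : ¬ CompactAt C m) :
    (m.1 + 1, m.2.1, m.2.2) ∉ C ∧ (m.1, m.2.1 + 1, m.2.2) ∉ C := by
  constructor <;> intro hx <;> apply hnc <;> intro c hd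
  · by_cases hb : Below c m
    · exact hqc _ hx c ⟨hd.1.trans (Nat.le_succ _), hd.2.1, hd.2.2⟩
        (fun h => by simp only [Below, Dominates] at h hd; omega)
    · exact hqc m hm c hd hb
  · by_cases hb : Below c m
    · exact hqc _ hx c ⟨hd.1, hd.2.1.trans (Nat.le_succ _), hd.2.2⟩
        (fun h => by simp only [Below, Dominates] at h hd; omega)
    · exact hqc m hm c hd hb
end
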